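/- (Proposition 1, equivalence of reduced and full contrast representations.) Let y_b ∈ ℝᵏ, let X_b be a real k×m matrix, and let V_b be a symmetric positive definite k×k matrix. Let A be a real n×k matrix with full column rank, and set y = A y_b, X = A X_b, and V = A V_b Aᵀ. If V⁺ is any Moore–Penrose pseudoinverse of V, then Xᵀ V⁺ y = X_bᵀ V_b⁻¹ y_b and Xᵀ V⁺ X = X_bᵀ V_b⁻¹ X_b. -/
import Mathlib


open Matrix

/-- `N` is a Moore–Penrose pseudoinverse of `M`: the four Penrose equations hold. -/
def IsMoorePenrose {n m : ℕ} (M : Matrix (Fin n) (Fin m) ℝ)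
    (N : Matrix (Fin m) (Fin n) ℝ) : Prop :=
  M * N * M = M ∧ N * M * N = N ∧ (M * N)ᵀ = M * N ∧ (N * M)ᵀ = N * M

lemma isUnit_of_rank_eq_card {k : ℕ} (B : Matrix (Fin k) (Fin k) ℝ)
    (h : B.rank = k) : IsUnit B := by
  rw [← Matrix.mulVec_surjective_iff_isUnit]
  have hr : LinearMap.range B.mulVecLin = ⊤ := by
    apply Submodule.eq_top_of_finrank_eq
    rw [show Module.finrank ℝ (LinearMap.range B.mulVecLin) = B.rank from rfl, h]
    simp [Module.finrank_pi]
  intro v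
  have : v ∈ LinearMap.range B.mulVecLin := hr ▸ Submodule.mem_top
  obtain ⟨w, hw⟩ := this
  exact ⟨w, hw⟩

/-- Proposition 1 (equivalence of reduced and full contrast representations):
the GLS score vector and Fisher information matrix coincide in the reduced and
full contrast representations. -/
theorem reduced_full_contrast_equiv {n k m : ℕ}
    (yb : Fin k → ℝ)
    (Xb : Matrix (Fin k) (Fin m) ℝ)
    (Vb : Matrix (Fin k) (Fin k) ℝ) (hVb : Vb.PosDef)
    (A : Matrix (Fin n) (Fin k) ℝ) (hA : A.rank = k)
    (Vplus : Matrix (Fin n) (Fin n) ℝ)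
    (hVplus : IsMoorePenrose (A * Vb * Aᵀ) Vplus) :
    ((A * Xb)ᵀ * Vplus).mulVec (A.mulVec yb) = (Xbᵀ * Vb⁻¹).mulVec yb ∧
    (A * Xb)ᵀ * Vplus * (A * Xb) = Xbᵀ * Vb⁻¹ * Xb := by
  -- Aᵀ * A is invertible
  have hAA : IsUnit (Aᵀ * A) := by
    apply isUnit_of_rank_eq_card
    rw [Matrix.rank_transpose_mul_self, hA]
  have hVbU : IsUnit Vb := hVb.isUnit
  have hVbinv : Vb⁻¹ * Vb = 1 := Matrix.nonsing_inv_mul _ (isUnit_iff_isUnit_det _ |>.1 hVbU)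
  have hVbinv' : Vb * Vb⁻¹ = 1 := Matrix.mul_nonsing_inv _ (isUnit_iff_isUnit_det _ |>.1 hVbU)
  set L : Matrix (Fin k) (Fin n) ℝ := (Aᵀ * A)⁻¹ * Aᵀ with hL
  have hLA : L * A = 1 := by
    rw [hL, Matrix.mul_assoc]
    exact Matrix.nonsing_inv_mul _ (isUnit_iff_isUnit_det _ |>.1 hAA)
  have hALt : Aᵀ * Lᵀ = 1 := by
    rw [← Matrix.transpose_mul, hLA, Matrix.transpose_one]
  -- sandwich the first Penrose equation
  have h1 := hVplus.1
  have key : Vb * (Aᵀ * Vplus * A) * Vb = Vb := by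
    calc Vb * (Aᵀ * Vplus * A) * Vb
        = L * (A * Vb * Aᵀ * Vplus * (A * Vb * Aᵀ)) * Lᵀ := by
          rw [show A * Vb * Aᵀ * Vplus * (A * Vb * Aᵀ)
              = A * (Vb * (Aᵀ * Vplus * A) * Vb) * Aᵀ by simp only [Matrix.mul_assoc]]
          rw [show L * (A * (Vb * (Aᵀ * Vplus * A) * Vb) * Aᵀ) * Lᵀ
              = (L * A) * (Vb * (Aᵀ * Vplus * A) * Vb) * (Aᵀ * Lᵀ) by simp only [Matrix.mul_assoc]]
          rw [hLA, hALt, Matrix.one_mul, Matrix.mul_one]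
      _ = L * (A * Vb * Aᵀ) * Lᵀ := by rw [h1]
      _ = (L * A) * Vb * (Aᵀ * Lᵀ) := by simp only [Matrix.mul_assoc]
      _ = Vb := by rw [hLA, hALt, Matrix.one_mul, Matrix.mul_one]
  have hmain : Aᵀ * Vplus * A = Vb⁻¹ := by
    calc Aᵀ * Vplus * A
        = Vb⁻¹ * (Vb * (Aᵀ * Vplus * A) * Vb) * Vb⁻¹ := by
          rw [show Vb⁻¹ * (Vb * (Aᵀ * Vplus * A) * Vb) * Vb⁻¹
              = (Vb⁻¹ * Vb) * (Aᵀ * Vplus * A) * (Vb * Vb⁻¹) by simp only [Matrix.mul_assoc]]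
          rw [hVbinv, hVbinv', Matrix.one_mul, Matrix.mul_one]
      _ = Vb⁻¹ * Vb * Vb⁻¹ := by rw [key]
      _ = Vb⁻¹ := by rw [hVbinv, Matrix.one_mul]
  have hmain' : Aᵀ * (Vplus * A) = Vb⁻¹ := by rw [← Matrix.mul_assoc, hmain]
  have hM : (A * Xb)ᵀ * Vplus * A = Xbᵀ * Vb⁻¹ := by
    simp only [Matrix.transpose_mul, Matrix.mul_assoc, hmain']
  constructor
  · rw [Matrix.mulVec_mulVec, hM]
  · rw [← Matrix.mul_assoc, hM]
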